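/- Let u_ρ ∈ GSBD²(Ω₁) with u_ρ → u in measure and sup_ρ E_ρ(u_ρ) < +∞. Assume the lower semicontinuity property: for any fixed norm ψ on ℝⁿ, ∫_{J_u} ψ(ν_u) dH^{n-1} ≤ liminf_ρ ∫_{J_{u_ρ}} ψ(ν_{u_ρ}) dH^{n-1}. Then (ν_u)_n = 0 H^{n-1}-a.e. on J_u. -/

import Mathlib

open MeasureTheory Set Filter Topology
open scoped ENNReal

/-- The anisotropic surface density `φ_ρ(ν)` (Euclidean norm of `(ν', ν_n/ρ)`),
ambient space `ℝ^{n+1}`. -/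
noncomputable def phiRho (n : ℕ) (ρ : ℝ) (ν : Fin (n + 1) → ℝ) : ℝ :=
  Real.sqrt ((∑ i : Fin n, (ν i.castSucc) ^ 2) + (ν (Fin.last n) / ρ) ^ 2)

--aux
noncomputable def Tmap (n : ℕ) (ρ : ℝ) (v : Fin (n + 1) → ℝ) :
    EuclideanSpace ℝ (Fin (n + 1)) :=
  WithLp.toLp 2 (fun i => if i = Fin.last n then v i / ρ else v i)

lemma Tmap_norm (n : ℕ) (ρ : ℝ) (v : Fin (n + 1) → ℝ) :
    ‖Tmap n ρ v‖ = phiRho n ρ v := by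
  rw [EuclideanSpace.norm_eq, phiRho]
  congr 1
  rw [Fin.sum_univ_castSucc]
  congr 1
  · refine Finset.sum_congr rfl fun i _ => ?_
    rw [Tmap, PiLp.toLp_apply, if_neg (Fin.castSucc_lt_last i).ne, Real.norm_eq_abs, sq_abs]
  · rw [Tmap, PiLp.toLp_apply, if_pos rfl, Real.norm_eq_abs, sq_abs]

lemma Tmap_add (n : ℕ) (ρ : ℝ) (v w : Fin (n + 1) → ℝ) :
    Tmap n ρ (v + w) = Tmap n ρ v + Tmap n ρ w := by
  ext i
  simp only [Tmap, PiLp.toLp_apply, Pi.add_apply, PiLp.add_apply]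
  split <;> simp [add_div]

lemma Tmap_smul (n : ℕ) (ρ : ℝ) (a : ℝ) (v : Fin (n + 1) → ℝ) :
    Tmap n ρ (a • v) = a • Tmap n ρ v := by
  ext i
  simp only [Tmap, PiLp.toLp_apply, Pi.smul_apply, PiLp.smul_apply, smul_eq_mul]
  split <;> simp [mul_div_assoc]

lemma phiRho_nonneg (n : ℕ) (ρ : ℝ) (v : Fin (n + 1) → ℝ) : 0 ≤ phiRho n ρ v :=
  Real.sqrt_nonneg _

lemma phiRho_eq_zero (n : ℕ) {ρ : ℝ} (hρ : ρ ≠ 0) (v : Fin (n + 1) → ℝ) :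
    phiRho n ρ v = 0 ↔ v = 0 := by
  rw [← Tmap_norm, norm_eq_zero]
  constructor
  · intro h
    funext i
    have hi := congrArg (fun x => x i) h
    simp only [Tmap, PiLp.toLp_apply, PiLp.zero_apply] at hi
    by_cases hl : i = Fin.last n
    · rw [if_pos hl] at hi
      have := div_eq_zero_iff.mp hi
      simpa [Pi.zero_apply] using this.resolve_right hρ
    · rw [if_neg hl] at hi; simpa using hi
  · rintro rfl
    ext i
    simp [Tmap]

lemma phiRho_smul (n : ℕ) (ρ : ℝ) (a : ℝ) (v : Fin (n + 1) → ℝ) :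
    phiRho n ρ (a • v) = |a| * phiRho n ρ v := by
  rw [← Tmap_norm, ← Tmap_norm, Tmap_smul, norm_smul, Real.norm_eq_abs]

lemma phiRho_add (n : ℕ) (ρ : ℝ) (v w : Fin (n + 1) → ℝ) :
    phiRho n ρ (v + w) ≤ phiRho n ρ v + phiRho n ρ w := by
  rw [← Tmap_norm, ← Tmap_norm, ← Tmap_norm, Tmap_add]
  exact norm_add_le _ _

lemma phiRho_mono (n : ℕ) {ρ ρ' : ℝ} (hρ : 0 < ρ) (h : ρ ≤ ρ') (v : Fin (n + 1) → ℝ) :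
    phiRho n ρ' v ≤ phiRho n ρ v := by
  apply Real.sqrt_le_sqrt
  apply add_le_add_right
  rw [div_pow, div_pow]
  exact div_le_div_of_nonneg_left (sq_nonneg _) (by positivity) (by gcongr)

lemma abs_last_le (n : ℕ) {ρ : ℝ} (hρ : 0 < ρ) (v : Fin (n + 1) → ℝ) :
    |v (Fin.last n)| ≤ ρ * phiRho n ρ v := by
  rw [← div_le_iff₀' hρ]
  have h1 : |v (Fin.last n)| / ρ = |v (Fin.last n) / ρ| := by
    rw [abs_div, abs_of_pos hρ]
  rw [h1, ← Real.sqrt_sq_eq_abs]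
  exact Real.sqrt_le_sqrt (le_add_of_nonneg_left (Finset.sum_nonneg fun i _ => sq_nonneg _))

/-- Horizontality of the limiting jump normal.  Suppose `u_ρ ∈ GSBD²(Ω₁)` have jump sets
`J ρ` with approximate unit normals `νj ρ`, the surface parts of the energies
`E_ρ(u_ρ) ≥ ∫_{J_{u_ρ}} φ_ρ(ν_{u_ρ}) dH^n` are uniformly bounded, and the limit `u` has
jump set `Ju` with approximate normal `νu`.  If for every norm `ψ` on `ℝ^{n+1}` the
lower-semicontinuity estimate
`∫_{J_u} ψ(ν_u) dH^n ≤ liminf_{ρ→0⁺} ∫_{J_{u_ρ}} ψ(ν_{u_ρ}) dH^n` holds, then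
`(ν_u)_n = 0` for `H^n`-a.e. point of `J_u`. -/
theorem stmt7 (n : ℕ)
    (J : ℝ → Set (Fin (n + 1) → ℝ)) (νj : ℝ → (Fin (n + 1) → ℝ) → Fin (n + 1) → ℝ)
    (Ju : Set (Fin (n + 1) → ℝ)) (νu : (Fin (n + 1) → ℝ) → Fin (n + 1) → ℝ)
    (hmeas : Measurable fun x => νu x (Fin.last n))
    (hbound : ∃ C₀ : ℝ≥0∞, C₀ ≠ ⊤ ∧ ∀ ρ : ℝ, 0 < ρ →
      ∫⁻ x in J ρ, ENNReal.ofReal (phiRho n ρ (νj ρ x)) ∂μH[(n : ℝ)] ≤ C₀)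
    (hlsc : ∀ ψ : (Fin (n + 1) → ℝ) → ℝ,
      (∀ v, 0 ≤ ψ v) → (∀ v, ψ v = 0 ↔ v = 0) →
      (∀ (a : ℝ) v, ψ (a • v) = |a| * ψ v) →
      (∀ v w, ψ (v + w) ≤ ψ v + ψ w) →
      ∫⁻ x in Ju, ENNReal.ofReal (ψ (νu x)) ∂μH[(n : ℝ)]
        ≤ Filter.liminf
            (fun ρ => ∫⁻ x in J ρ, ENNReal.ofReal (ψ (νj ρ x)) ∂μH[(n : ℝ)])
            (nhdsWithin 0 (Set.Ioi (0 : ℝ)))) :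
    ∀ᵐ x ∂(μH[(n : ℝ)].restrict Ju), νu x (Fin.last n) = 0 := by
  obtain ⟨C₀, hC₀top, hC₀⟩ := hbound
  set I : ℝ≥0∞ := ∫⁻ x in Ju, ENNReal.ofReal |νu x (Fin.last n)| ∂μH[(n : ℝ)] with hI
  have key : ∀ ρ' : ℝ, 0 < ρ' → I ≤ ENNReal.ofReal ρ' * C₀ := by
    intro ρ' hρ'
    have hψ := hlsc (phiRho n ρ') (phiRho_nonneg n ρ') (phiRho_eq_zero n hρ'.ne')
      (phiRho_smul n ρ') (phiRho_add n ρ')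
    -- the liminf on the right is at most C₀
    have hev : ∀ᶠ ρ in nhdsWithin (0:ℝ) (Set.Ioi 0),
        (∫⁻ x in J ρ, ENNReal.ofReal (phiRho n ρ' (νj ρ x)) ∂μH[(n : ℝ)]) ≤ C₀ := by
      filter_upwards [Ioo_mem_nhdsGT_of_mem (left_mem_Ico.2 hρ')] with ρ hρ
      refine le_trans ?_ (hC₀ ρ hρ.1)
      exact lintegral_mono fun x =>
        ENNReal.ofReal_le_ofReal (phiRho_mono n hρ.1 hρ.2.le _)
    have hliminf :
        Filter.liminf
          (fun ρ => ∫⁻ x in J ρ, ENNReal.ofReal (phiRho n ρ' (νj ρ x)) ∂μH[(n : ℝ)])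
          (nhdsWithin 0 (Set.Ioi (0:ℝ))) ≤ C₀ :=
      le_trans Filter.liminf_le_limsup (Filter.limsup_le_of_le (by isBoundedDefault) hev)
    have h1 : ∫⁻ x in Ju, ENNReal.ofReal (phiRho n ρ' (νu x)) ∂μH[(n : ℝ)] ≤ C₀ :=
      hψ.trans hliminf
    calc I ≤ ∫⁻ x in Ju, ENNReal.ofReal ρ' * ENNReal.ofReal (phiRho n ρ' (νu x))
              ∂μH[(n : ℝ)] := by
          refine lintegral_mono fun x => ?_
          rw [← ENNReal.ofReal_mul hρ'.le]
          exact ENNReal.ofReal_le_ofReal (abs_last_le n hρ' _)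
      _ = ENNReal.ofReal ρ' * ∫⁻ x in Ju, ENNReal.ofReal (phiRho n ρ' (νu x))
              ∂μH[(n : ℝ)] := lintegral_const_mul' _ _ ENNReal.ofReal_ne_top
      _ ≤ ENNReal.ofReal ρ' * C₀ := mul_le_mul_right h1 _
  have hI0 : I = 0 := by
    have htend : Filter.Tendsto (fun ρ' : ℝ => ENNReal.ofReal ρ' * C₀)
        (nhdsWithin (0:ℝ) (Set.Ioi 0)) (nhds 0) := by
      have h0 : Filter.Tendsto (fun ρ' : ℝ => ENNReal.ofReal ρ')
          (nhdsWithin (0:ℝ) (Set.Ioi 0)) (nhds 0) := by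
        have h := (ENNReal.continuous_ofReal.tendsto 0).mono_left
          (nhdsWithin_le_nhds (s := Set.Ioi (0:ℝ)))
        simpa using h
      simpa using ENNReal.Tendsto.mul_const h0 (Or.inr hC₀top)
    have hle : I ≤ 0 :=
      ge_of_tendsto htend (eventually_nhdsWithin_of_forall fun ρ' hρ' => key ρ' hρ')
    exact le_antisymm hle (zero_le)
  have hmeas' : Measurable fun x => ENNReal.ofReal |νu x (Fin.last n)| :=
    ENNReal.measurable_ofReal.comp hmeas.abs
  have := (lintegral_eq_zero_iff hmeas').mp hI0
  filter_upwards [this] with x hx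
  have : |νu x (Fin.last n)| ≤ 0 := by
    have := hx
    simp only [Pi.zero_apply, ENNReal.ofReal_eq_zero] at this
    exact this
  exact abs_nonpos_iff.mp this
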